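/- Let φ(x) be the compositional inverse of x(1-x)/(1+x) as a formal power series over ℚ. Then φ(x) = (1 - x - √(1-6x+x²))/2, i.e., φ satisfies (2φ - 1 + x)² = 1 - 6x + x² and φ(0) = 0. -/

import Mathlib

open PowerSeries

/-- Composition `f ∘ a` of formal power series (intended for `a` with zero constant term). -/
noncomputable def psComp {R : Type*} [CommRing R] (f a : R⟦X⟧) : R⟦X⟧ :=
  PowerSeries.mk fun n => ∑ i ∈ Finset.range (n + 1), PowerSeries.coeff i f * PowerSeries.coeff n (a ^ i)

lemma coeff_pow_zero {a : ℚ⟦X⟧} (ha : constantCoeff a = 0) {n i : ℕ} (h : n < i) :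
    coeff n (a ^ i) = 0 := by
  have hd : (X : ℚ⟦X⟧) ^ i ∣ a ^ i := pow_dvd_pow_of_dvd (X_dvd_iff.mpr ha) i
  exact X_pow_dvd_iff.mp hd n h

lemma coeff_eval₂ (a : ℚ⟦X⟧) (ha : constantCoeff a = 0) (P : Polynomial ℚ) (n : ℕ) :
    coeff n (P.eval₂ C a) =
      ∑ i ∈ Finset.range (n + 1), P.coeff i * coeff n (a ^ i) := by
  rw [Polynomial.eval₂_eq_sum, Polynomial.sum, map_sum]
  have hterm : ∀ i, coeff n (C (P.coeff i) * a ^ i) = P.coeff i * coeff n (a ^ i) := by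
    intro i; rw [coeff_C_mul]
  simp_rw [hterm]
  have h1 : ∑ x ∈ P.support, P.coeff x * coeff n (a ^ x)
      = ∑ x ∈ P.support ∪ Finset.range (n+1), P.coeff x * coeff n (a ^ x) := by
    refine Finset.sum_subset Finset.subset_union_left ?_
    intro x _ hx
    rw [Polynomial.notMem_support_iff.mp hx, zero_mul]
  have h2 : ∑ x ∈ Finset.range (n+1), P.coeff x * coeff n (a ^ x)
      = ∑ x ∈ P.support ∪ Finset.range (n+1), P.coeff x * coeff n (a ^ x) := by
    refine Finset.sum_subset Finset.subset_union_right ?_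
    intro x _ hx
    rw [coeff_pow_zero ha (by simpa using hx), mul_zero]
  rw [h1, h2]

lemma coeff_psComp (f a : ℚ⟦X⟧) (n : ℕ) :
    coeff n (psComp f a) = ∑ i ∈ Finset.range (n + 1), coeff i f * coeff n (a ^ i) := by
  simp [psComp]

lemma psComp_eq_eval (f a : ℚ⟦X⟧) (ha : constantCoeff a = 0) {n m : ℕ} (hm : n < m) :
    coeff n (psComp f a) = coeff n ((trunc m f).eval₂ C a) := by
  rw [coeff_psComp, coeff_eval₂ a ha]
  refine Finset.sum_congr rfl fun i hi => ?_
  rw [coeff_trunc, if_pos (lt_of_lt_of_le (Finset.mem_range.mp hi) hm)]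

lemma psComp_mul (f g a : ℚ⟦X⟧) (ha : constantCoeff a = 0) :
    psComp (f * g) a = psComp f a * psComp g a := by
  ext n
  rw [psComp_eq_eval (f*g) a ha (Nat.lt_succ_self n)]
  have key : coeff n ((trunc (n+1) (f*g)).eval₂ C a)
      = coeff n ((trunc (n+1) f * trunc (n+1) g).eval₂ C a) := by
    rw [coeff_eval₂ a ha, coeff_eval₂ a ha]
    refine Finset.sum_congr rfl fun i hi => ?_
    congr 1
    rw [coeff_trunc, if_pos (Finset.mem_range.mp hi), PowerSeries.coeff_mul, Polynomial.coeff_mul]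
    refine Finset.sum_congr rfl fun p hp => ?_
    have h1 := Finset.HasAntidiagonal.antidiagonal.fst_le hp
    have h2 := Finset.HasAntidiagonal.antidiagonal.snd_le hp
    have hi' := Finset.mem_range.mp hi
    rw [coeff_trunc, coeff_trunc, if_pos (by omega), if_pos (by omega)]
  rw [key, Polynomial.eval₂_mul, PowerSeries.coeff_mul, PowerSeries.coeff_mul]
  refine Finset.sum_congr rfl fun p hp => ?_
  have h1 := Finset.HasAntidiagonal.antidiagonal.fst_le hp
  have h2 := Finset.HasAntidiagonal.antidiagonal.snd_le hp
  rw [← psComp_eq_eval f a ha (by omega), ← psComp_eq_eval g a ha (by omega)]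

lemma psComp_one (a : ℚ⟦X⟧) : psComp 1 a = 1 := by
  ext n
  rw [coeff_psComp]
  rw [Finset.sum_eq_single 0]
  · simp
  · intro i hi hi0
    simp [coeff_one, hi0]
  · simp

lemma psComp_X (a : ℚ⟦X⟧) (ha : constantCoeff a = 0) : psComp X a = a := by
  ext n
  rw [coeff_psComp]
  rw [Finset.sum_eq_single 1]
  · simp
  · intro i hi hi1
    rcases Nat.eq_zero_or_pos i with h | h
    · subst h; simp
    · rw [coeff_X, if_neg hi1, zero_mul]
  · intro h
    have hn : n = 0 := by simpa using h
    subst hn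
    simp [coeff_zero_eq_constantCoeff, ha]

lemma psComp_add (f g a : ℚ⟦X⟧) : psComp (f + g) a = psComp f a + psComp g a := by
  ext n
  simp [coeff_psComp, add_mul, Finset.sum_add_distrib]

lemma psComp_sub (f g a : ℚ⟦X⟧) : psComp (f - g) a = psComp f a - psComp g a := by
  ext n
  simp [coeff_psComp, sub_mul, Finset.sum_sub_distrib]

theorem stmt3 (φ : ℚ⟦X⟧)
    (hφ0 : PowerSeries.constantCoeff φ = 0)
    (hrev : psComp (X * (1 - X) * (1 + X : ℚ⟦X⟧)⁻¹) φ = X) :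
    (2 * φ - 1 + X) ^ 2 = 1 - 6 * X + X ^ 2 ∧ PowerSeries.constantCoeff φ = 0 := by
  refine ⟨?_, hφ0⟩
  have hunit : constantCoeff (1 + X : ℚ⟦X⟧) ≠ 0 := by simp
  have hinv : ((1 + X : ℚ⟦X⟧)⁻¹) * (1 + X) = 1 := PowerSeries.inv_mul_cancel _ hunit
  have key : psComp (X * (1 - X) * (1 + X : ℚ⟦X⟧)⁻¹) φ * psComp (1 + X) φ
      = psComp (X * (1 - X)) φ := by
    rw [← psComp_mul _ _ _ hφ0, mul_assoc, hinv, mul_one]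
  have h1 : psComp (1 + X : ℚ⟦X⟧) φ = 1 + φ := by
    rw [psComp_add, psComp_one, psComp_X _ hφ0]
  have h2 : psComp (X * (1 - X) : ℚ⟦X⟧) φ = φ * (1 - φ) := by
    rw [psComp_mul _ _ _ hφ0, psComp_sub, psComp_one, psComp_X _ hφ0]
  rw [hrev, h1, h2] at key
  linear_combination (4 : ℚ⟦X⟧) * key
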